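/- For every a ∈ ℕ and d ∈ ℤ, the set E_{a,d} = {n ∈ ℕ : s₂(n+a) - s₂(n) = d} is a finite (possibly empty) union of sets of the form [w] = {n : the binary expansion of n ends with the word w}, where w ranges over finite binary words. -/

import Mathlib

/-- `s₂ n` is the number of 1's in the binary expansion of `n`. -/
def s2 (n : ℕ) : ℕ := (Nat.digits 2 n).sum

/-- `n ∈ [w]`: the binary expansion of `n` ends with the word `w`, i.e. the low-order
binary digits of `n` coincide with `w` (digit `i` of `n` equals `w.get i` for `i < w.length`). -/
def endsWith (w : List Bool) (n : ℕ) : Prop :=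
  ∀ i : Fin w.length, n.testBit i = w.get i

lemma s2_two_mul_add (k b : ℕ) (hb : b < 2) : s2 (2 * k + b) = s2 k + b := by
  rcases Nat.eq_zero_or_pos (2 * k + b) with h | h
  · have hk : k = 0 := by omega
    have hb0 : b = 0 := by omega
    simp [hk, hb0, s2]
  · unfold s2
    rw [Nat.digits_def' (by norm_num : (1:ℕ) < 2) h]
    have h1 : (2 * k + b) % 2 = b := by omega
    have h2 : (2 * k + b) / 2 = k := by omega
    rw [h1, h2]
    simp [add_comm]

lemma s2_split (K q r : ℕ) (hr : r < 2 ^ K) : s2 (q * 2 ^ K + r) = s2 q + s2 r := by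
  induction K generalizing r with
  | zero => interval_cases r; simp [s2]
  | succ K ih =>
    have hr2 : r / 2 < 2 ^ K := by
      have := Nat.pow_succ 2 K; omega
    have e1 : q * 2 ^ (K + 1) + r = 2 * (q * 2 ^ K + r / 2) + r % 2 := by
      have := Nat.div_add_mod r 2; ring_nf; omega
    have e2 : r = 2 * (r / 2) + r % 2 := by omega
    rw [e1, s2_two_mul_add _ _ (Nat.mod_lt _ (by norm_num)), ih _ hr2]
    conv_rhs => rw [e2, s2_two_mul_add _ _ (Nat.mod_lt _ (by norm_num))]
    omega

lemma s2_succ_le (m : ℕ) : s2 (m + 1) ≤ s2 m + 1 := by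
  induction m using Nat.strong_induction_on with
  | _ m ih =>
    rcases Nat.even_or_odd m with ⟨k, hk⟩ | ⟨k, hk⟩
    · subst hk
      have : k + k = 2 * k := by ring
      rw [this, s2_two_mul_add k 1 (by norm_num)]
      have e0 : 2 * k = 2 * k + 0 := by omega
      rw [e0, s2_two_mul_add k 0 (by norm_num)]
    · subst hk
      have e1 : 2 * k + 1 + 1 = 2 * (k + 1) + 0 := by ring
      rw [e1, s2_two_mul_add _ _ (by norm_num), s2_two_mul_add _ _ (by norm_num)]
      have := ih k (by omega)
      omega

lemma s2_pow_sub_one (m : ℕ) : s2 (2 ^ m - 1) = m := by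
  induction m with
  | zero => simp [s2]
  | succ m ih =>
    have e : 2 ^ (m + 1) - 1 = 2 * (2 ^ m - 1) + 1 := by
      have : 1 ≤ 2 ^ m := Nat.one_le_two_pow; omega
    rw [e, s2_two_mul_add _ _ (by norm_num), ih]

lemma s2_le_of_lt (L m : ℕ) (h : m < 2 ^ L) : s2 m ≤ L := by
  induction L generalizing m with
  | zero => interval_cases m; simp [s2]
  | succ L ih =>
    have e : m = 2 * (m / 2) + m % 2 := by omega
    rw [e, s2_two_mul_add _ _ (Nat.mod_lt _ (by norm_num))]
    have : m / 2 < 2 ^ L := by have := Nat.pow_succ 2 L; omega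
    have := ih _ this
    omega

lemma overflow_bound (a L K n : ℕ) (ha : a < 2 ^ L) (hL : L ≤ K)
    (hover : 2 ^ K ≤ n % 2 ^ K + a) :
    (s2 (n + a) : ℤ) - s2 n ≤ 1 + 2 * L - K := by
  have hKpos : 0 < 2 ^ K := Nat.pow_pos (by norm_num)
  set q := n / 2 ^ K with hq
  set r := n % 2 ^ K with hrdef
  have hr : r < 2 ^ K := Nat.mod_lt _ hKpos
  have hn : n = q * 2 ^ K + r := by
    rw [hq, hrdef, mul_comm]; exact (Nat.div_add_mod n (2 ^ K)).symm
  have hsn : s2 n = s2 q + s2 r := by rw [hn]; exact s2_split _ _ _ hr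
  have hs : r + a - 2 ^ K < 2 ^ L := by omega
  have hna : n + a = (q + 1) * 2 ^ K + (r + a - 2 ^ K) := by
    rw [hn]; ring_nf; omega
  have hsna : s2 (n + a) = s2 (q + 1) + s2 (r + a - 2 ^ K) := by
    rw [hna]; exact s2_split _ _ _ (lt_of_lt_of_le hs (Nat.pow_le_pow_right (by norm_num) hL))
  have h1 : s2 (r + a - 2 ^ K) ≤ L := s2_le_of_lt _ _ hs
  have h2 : s2 (q + 1) ≤ s2 q + 1 := s2_succ_le q
  -- lower bound on s2 r
  have hLK : (2 : ℕ) ^ L ≤ 2 ^ K := Nat.pow_le_pow_right (by norm_num) hL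
  have hrge : 2 ^ K - 2 ^ L ≤ r := by omega
  have hpow : 2 ^ (K - L) * 2 ^ L = 2 ^ K := by
    rw [← pow_add]; congr 1; omega
  have hrsplit : r = (2 ^ (K - L) - 1) * 2 ^ L + (r - (2 ^ K - 2 ^ L)) := by
    have h1pow : 1 ≤ 2 ^ (K - L) := Nat.one_le_two_pow
    have : (2 ^ (K - L) - 1) * 2 ^ L = 2 ^ K - 2 ^ L := by
      rw [Nat.sub_mul, hpow, one_mul]
    omega
  have hs' : r - (2 ^ K - 2 ^ L) < 2 ^ L := by omega
  have h3 : K - L ≤ s2 r := by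
    rw [hrsplit, s2_split _ _ _ hs', s2_pow_sub_one]; omega
  rw [hsn, hsna]
  have : (K : ℤ) - L ≤ s2 r := by
    have : ((K - L : ℕ) : ℤ) ≤ s2 r := by exact_mod_cast h3
    omega
  push_cast
  omega

lemma mod_iff (a : ℕ) (d : ℤ) : ∃ K : ℕ, 0 < K ∧ ∀ n : ℕ,
    (((s2 (n + a) : ℤ) - s2 n = d) ↔ ((s2 (n % 2 ^ K + a) : ℤ) - s2 (n % 2 ^ K) = d)) := by
  set L := Nat.size a with hLdef
  have ha : a < 2 ^ L := Nat.lt_size_self a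
  refine ⟨2 * L + 2 + (-d).toNat, by omega, fun n => ?_⟩
  set K := 2 * L + 2 + (-d).toNat with hKdef
  have hL : L ≤ K := by omega
  have hKpos : 0 < 2 ^ K := Nat.pow_pos (by norm_num)
  set r := n % 2 ^ K with hrdef
  have hr : r < 2 ^ K := Nat.mod_lt _ hKpos
  by_cases hcase : r + a < 2 ^ K
  · have hn : n = (n / 2 ^ K) * 2 ^ K + r := by
      rw [hrdef, mul_comm]; exact (Nat.div_add_mod n (2 ^ K)).symm
    have hsn : s2 n = s2 (n / 2 ^ K) + s2 r := by
      conv_lhs => rw [hn]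
      exact s2_split _ _ _ hr
    have hsna : s2 (n + a) = s2 (n / 2 ^ K) + s2 (r + a) := by
      conv_lhs => rw [hn]
      rw [add_assoc]; exact s2_split _ _ _ hcase
    rw [hsn, hsna]
    push_cast
    constructor <;> intro h <;> omega
  · have hd : (1 : ℤ) + 2 * L - K < d := by
      have := Int.self_le_toNat (-d)
      omega
    have b1 : (s2 (n + a) : ℤ) - s2 n ≤ 1 + 2 * L - K :=
      overflow_bound a L K n ha hL (by omega)
    have b2 : (s2 (r + a) : ℤ) - s2 r ≤ 1 + 2 * L - K := by
      have hrr : r % 2 ^ K = r := Nat.mod_eq_of_lt hr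
      have := overflow_bound a L K r ha hL (by omega)
      exact this
    constructor <;> intro h <;> omega

theorem E_is_finite_union_of_cylinders (a : ℕ) (d : ℤ) :
    ∃ W : Finset (List Bool),
      {n : ℕ | (s2 (n + a) : ℤ) - s2 n = d} = {n : ℕ | ∃ w ∈ W, endsWith w n} := by
  obtain ⟨K, hKpos, hiff⟩ := mod_iff a d
  have h2K : 0 < 2 ^ K := Nat.pow_pos (by norm_num)
  refine ⟨((Finset.range (2 ^ K)).filter
      (fun r => (s2 (r + a) : ℤ) - s2 r = d)).image
      (fun r => List.ofFn (fun i : Fin K => r.testBit i)), ?_⟩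
  ext n
  simp only [Set.mem_setOf_eq]
  constructor
  · intro h
    have hr : n % 2 ^ K < 2 ^ K := Nat.mod_lt _ h2K
    have hrE : (s2 (n % 2 ^ K + a) : ℤ) - s2 (n % 2 ^ K) = d := (hiff n).mp h
    refine ⟨_, Finset.mem_image_of_mem _
      (Finset.mem_filter.2 ⟨Finset.mem_range.2 hr, hrE⟩), ?_⟩
    intro i
    have hi : (i : ℕ) < K := by
      have := i.isLt; simpa using this
    simp only [List.get_ofFn, Fin.cast]
    have : (n % 2 ^ K).testBit i = n.testBit i := by
      rw [Nat.testBit_mod_two_pow]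
      simp [hi]
    simp [this]
  · rintro ⟨w, hw, hend⟩
    simp only [Finset.mem_image, Finset.mem_filter, Finset.mem_range] at hw
    obtain ⟨r, ⟨hr, hrE⟩, rfl⟩ := hw
    have hmod : n % 2 ^ K = r := by
      apply Nat.eq_of_testBit_eq
      intro i
      rw [Nat.testBit_mod_two_pow]
      by_cases hi : i < K
      · have := hend ⟨i, by simpa using hi⟩
        simp only [List.get_ofFn, Fin.cast] at this
        simp [hi, ← this]
      · have : r.testBit i = false :=
          Nat.testBit_lt_two_pow (lt_of_lt_of_le hr (Nat.pow_le_pow_right (by norm_num) (by omega)))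
        simp [hi, this]
    exact (hiff n).mpr (by rw [hmod]; exact hrE)
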